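/- arXiv:1606.02641 — 6 statements merged into one kernel-verified Lean document; each statement's English description precedes it below -/
import Mathlib

section
/- For every integer n ≥ 3, the sum over ℓ from 1 to n-3 and k from 1 to n-ℓ-2 of (2^{ℓ+1}-2)·(2^{ℓ+1}-3)·(2^{k+1}-2)·(2^{k+1}-3)·2^{3(n-ℓ-k-2)} equals (16/441)·2^{3n} - n·2^{2n} + 5·2^{2n} - (25/3)·n·2^n + (95/9)·2^n - (36/7)·n - 764/49. -/
private lemma geo (a r : ℚ) (h : a ≠ r) (M : ℕ) :
    ∑ ℓ ∈ Finset.Icc 1 M, a^ℓ * r^(M-ℓ) = (a^(M+1) - a * r^M) / (a - r) := by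
  have hne : a - r ≠ 0 := sub_ne_zero.mpr h
  induction M with
  | zero => simp
  | succ M ih =>
    rw [Finset.sum_Icc_succ_top (by omega : 1 ≤ M+1)]
    have hstep : ∑ ℓ ∈ Finset.Icc 1 M, a^ℓ * r^(M+1-ℓ)
        = r * ∑ ℓ ∈ Finset.Icc 1 M, a^ℓ * r^(M-ℓ) := by
      rw [Finset.mul_sum]
      refine Finset.sum_congr rfl fun x hx => ?_
      have hx' : x ≤ M := (Finset.mem_Icc.mp hx).2
      rw [show M+1-x = (M-x)+1 by omega, pow_succ]
      ring
    rw [hstep, ih]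
    simp only [Nat.sub_self, pow_zero, mul_one]
    field_simp
    ring

private lemma geoEq (a : ℚ) (M : ℕ) :
    ∑ ℓ ∈ Finset.Icc 1 M, a^ℓ * a^(M-ℓ) = M * a^M := by
  have h : ∀ x ∈ Finset.Icc 1 M, a^x * a^(M-x) = a^M := fun x hx => by
    have hx' : x ≤ M := (Finset.mem_Icc.mp hx).2
    rw [← pow_add, show x + (M-x) = M by omega]
  rw [Finset.sum_congr rfl h, Finset.sum_const, Nat.card_Icc]
  simp [mul_comm]

private lemma auxInnerSum (m : ℕ) :
    ∑ k ∈ Finset.Icc 1 m, ((2^(k+1)-2) * (2^(k+1)-3) : ℚ) * 8^(m-k)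
      = (32/21)*8^m - 4*4^m + (10/3)*2^m - 6/7 := by
  have h1 := geo 4 8 (by norm_num) m
  have h2 := geo 2 8 (by norm_num) m
  have h3 := geo 1 8 (by norm_num) m
  have hexp : ∀ k ∈ Finset.Icc 1 m,
      ((2^(k+1)-2) * (2^(k+1)-3) : ℚ) * 8^(m-k)
        = 4*((4:ℚ)^k*8^(m-k)) - 10*((2:ℚ)^k*8^(m-k)) + 6*((1:ℚ)^k*8^(m-k)) := by
    intro k _
    rw [show (4:ℚ)^k = 2^k * 2^k by rw [← mul_pow]; norm_num, one_pow]
    ring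
  rw [Finset.sum_congr rfl hexp]
  rw [Finset.sum_add_distrib, Finset.sum_sub_distrib, ← Finset.mul_sum, ← Finset.mul_sum,
    ← Finset.mul_sum, h1, h2, h3]
  norm_num [mul_comm]
  ring

theorem stmt_0 (n : ℕ) (hn : 3 ≤ n) :
    (∑ ℓ ∈ Finset.Icc 1 (n-3), ∑ k ∈ Finset.Icc 1 (n-ℓ-2),
      ((2^(ℓ+1)-2) * (2^(ℓ+1)-3) * (2^(k+1)-2) * (2^(k+1)-3) * 2^(3*(n-ℓ-k-2)) : ℚ))
    = (16/441) * 2^(3*n) - n * 2^(2*n) + 5 * 2^(2*n)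
      - (25/3) * n * 2^n + (95/9) * 2^n - (36/7) * n - 764/49 := by
  obtain ⟨N, rfl⟩ : ∃ N, n = N + 3 := ⟨n - 3, by omega⟩
  have hout : N + 3 - 3 = N := by omega
  rw [hout]
  have step1 : ∀ ℓ ∈ Finset.Icc 1 N,
      (∑ k ∈ Finset.Icc 1 (N+3-ℓ-2),
        ((2^(ℓ+1)-2) * (2^(ℓ+1)-3) * (2^(k+1)-2) * (2^(k+1)-3) * 2^(3*(N+3-ℓ-k-2)) : ℚ))
      = ((2^(ℓ+1)-2) * (2^(ℓ+1)-3) : ℚ) *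
        ((32/21)*8^(N+1-ℓ) - 4*4^(N+1-ℓ) + (10/3)*2^(N+1-ℓ) - 6/7) := by
    intro ℓ hℓ
    obtain ⟨hℓ1, hℓ2⟩ := Finset.mem_Icc.mp hℓ
    rw [show N+3-ℓ-2 = N+1-ℓ by omega, ← auxInnerSum (N+1-ℓ), Finset.mul_sum]
    refine Finset.sum_congr rfl fun k hk => ?_
    obtain ⟨hk1, hk2⟩ := Finset.mem_Icc.mp hk
    rw [show 3*(N+3-ℓ-k-2) = 3*((N+1-ℓ)-k) by omega, pow_mul]
    norm_num [mul_comm]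
    ring
  rw [Finset.sum_congr rfl step1]
  have step2 : ∀ ℓ ∈ Finset.Icc 1 N,
      ((2^(ℓ+1)-2) * (2^(ℓ+1)-3) : ℚ) *
        ((32/21)*8^(N+1-ℓ) - 4*4^(N+1-ℓ) + (10/3)*2^(N+1-ℓ) - 6/7)
      = (1024/21)*((4:ℚ)^ℓ*8^(N-ℓ)) - (2560/21)*((2:ℚ)^ℓ*8^(N-ℓ)) + (512/7)*((1:ℚ)^ℓ*8^(N-ℓ))
        - 64*((4:ℚ)^ℓ*4^(N-ℓ)) + 160*((2:ℚ)^ℓ*4^(N-ℓ)) - 96*((1:ℚ)^ℓ*4^(N-ℓ))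
        + (80/3)*((4:ℚ)^ℓ*2^(N-ℓ)) - (200/3)*((2:ℚ)^ℓ*2^(N-ℓ)) + 40*((1:ℚ)^ℓ*2^(N-ℓ))
        - (24/7)*((4:ℚ)^ℓ*1^(N-ℓ)) + (60/7)*((2:ℚ)^ℓ*1^(N-ℓ)) - (36/7)*((1:ℚ)^ℓ*1^(N-ℓ)) := by
    intro ℓ hℓ
    obtain ⟨hℓ1, hℓ2⟩ := Finset.mem_Icc.mp hℓ
    rw [show N+1-ℓ = (N-ℓ)+1 by omega]
    rw [show (4:ℚ)^ℓ = 2^ℓ * 2^ℓ by rw [← mul_pow]; norm_num]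
    simp only [one_pow, pow_succ]
    ring
  rw [Finset.sum_congr rfl step2]
  simp only [Finset.sum_add_distrib, Finset.sum_sub_distrib, ← Finset.mul_sum]
  rw [geo 4 8 (by norm_num) N, geo 2 8 (by norm_num) N, geo 1 8 (by norm_num) N,
    geoEq 4 N, geo 2 4 (by norm_num) N, geo 1 4 (by norm_num) N,
    geo 4 2 (by norm_num) N, geoEq 2 N, geo 1 2 (by norm_num) N,
    geo 4 1 (by norm_num) N, geo 2 1 (by norm_num) N, geoEq 1 N]
  have e1 : (2:ℚ)^(3*(N+3)) = 512 * 8^N := by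
    rw [pow_mul, pow_add]; norm_num [mul_comm]
  have e2 : (2:ℚ)^(2*(N+3)) = 64 * 4^N := by
    rw [pow_mul, pow_add]; norm_num [mul_comm]
  have e3 : (2:ℚ)^(N+3) = 8 * 2^N := by rw [pow_add]; norm_num [mul_comm]
  rw [e1, e2, e3]
  push_cast
  ring
end

section
/- For every integer n ≥ 3, the sum over ℓ from 1 to n-3 and k from 1 to n-ℓ-2 of (2^{ℓ+1}-2)·(2^{k+1}-2)·(2^{k+1}-3)·2^{3(n-ℓ-k-2)} equals (4/441)·2^{3n} - (1/3)·2^{2n} + (5/3)·n·2^n - (37/9)·2^n + (12/7)·n + 652/147. -/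
open Finset

lemma my_inner_sum (M : ℕ) :
    ∑ k ∈ Icc 1 M, ((2^(k+1)-2) * (2^(k+1)-3) * 2^(3*(M-k)) : ℚ)
      = 32/21 * 8^M - 4 * 4^M + 10/3 * 2^M - 6/7 := by
  induction M with
  | zero => norm_num
  | succ M ih =>
    rw [Finset.sum_Icc_succ_top (by omega)]
    have h : ∀ k ∈ Icc 1 M, ((2^(k+1)-2) * (2^(k+1)-3) * 2^(3*(M+1-k)) : ℚ)
        = 8 * ((2^(k+1)-2) * (2^(k+1)-3) * 2^(3*(M-k))) := by
      intro k hk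
      simp only [mem_Icc] at hk
      have h3 : 3*(M+1-k) = 3*(M-k) + 3 := by omega
      rw [h3, pow_add]; ring
    rw [Finset.sum_congr rfl h, ← Finset.mul_sum, ih]
    have e : 3*(M+1-(M+1)) = 0 := by omega
    have h4 : ∀ j:ℕ, (4:ℚ)^j = 2^j * 2^j := fun j => by rw [← mul_pow]; norm_num
    have h8 : ∀ j:ℕ, (8:ℚ)^j = 2^j * 2^j * 2^j := fun j => by rw [← mul_pow, ← mul_pow]; norm_num
    simp only [e, pow_zero, h4, h8]
    ring

lemma my_lemA (m : ℕ) :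
    ∑ ℓ ∈ Icc 1 m, ((2^(ℓ+1)-2) * 8^(m+1-ℓ) : ℚ)
      = 64/21 * 8^m - 16/3 * 2^m + 16/7 := by
  induction m with
  | zero => norm_num
  | succ M ih =>
    rw [Finset.sum_Icc_succ_top (by omega)]
    have h : ∀ ℓ ∈ Icc 1 M, ((2^(ℓ+1)-2) * 8^(M+1+1-ℓ) : ℚ)
        = 8 * ((2^(ℓ+1)-2) * 8^(M+1-ℓ)) := by
      intro ℓ hℓ
      simp only [mem_Icc] at hℓ
      have h3 : M+1+1-ℓ = (M+1-ℓ) + 1 := by omega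
      rw [h3, pow_add]; ring
    rw [Finset.sum_congr rfl h, ← Finset.mul_sum, ih]
    have e : M+1+1-(M+1) = 1 := by omega
    rw [e, pow_one]
    ring

lemma my_lemB (m : ℕ) :
    ∑ ℓ ∈ Icc 1 m, ((2^(ℓ+1)-2) * 4^(m+1-ℓ) : ℚ)
      = 16/3 * 4^m - 8 * 2^m + 8/3 := by
  induction m with
  | zero => norm_num
  | succ M ih =>
    rw [Finset.sum_Icc_succ_top (by omega)]
    have h : ∀ ℓ ∈ Icc 1 M, ((2^(ℓ+1)-2) * 4^(M+1+1-ℓ) : ℚ)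
        = 4 * ((2^(ℓ+1)-2) * 4^(M+1-ℓ)) := by
      intro ℓ hℓ
      simp only [mem_Icc] at hℓ
      have h3 : M+1+1-ℓ = (M+1-ℓ) + 1 := by omega
      rw [h3, pow_add]; ring
    rw [Finset.sum_congr rfl h, ← Finset.mul_sum, ih]
    have e : M+1+1-(M+1) = 1 := by omega
    rw [e, pow_one]
    ring

lemma my_lemC (m : ℕ) :
    ∑ ℓ ∈ Icc 1 m, ((2^(ℓ+1)-2) * 2^(m+1-ℓ) : ℚ)
      = 4 * m * 2^m - 4 * 2^m + 4 := by
  induction m with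
  | zero => norm_num
  | succ M ih =>
    rw [Finset.sum_Icc_succ_top (by omega)]
    have h : ∀ ℓ ∈ Icc 1 M, ((2^(ℓ+1)-2) * 2^(M+1+1-ℓ) : ℚ)
        = 2 * ((2^(ℓ+1)-2) * 2^(M+1-ℓ)) := by
      intro ℓ hℓ
      simp only [mem_Icc] at hℓ
      have h3 : M+1+1-ℓ = (M+1-ℓ) + 1 := by omega
      rw [h3, pow_add]; ring
    rw [Finset.sum_congr rfl h, ← Finset.mul_sum, ih]
    have e : M+1+1-(M+1) = 1 := by omega
    rw [e, pow_one]
    push_cast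
    ring

lemma my_lemD (m : ℕ) :
    ∑ ℓ ∈ Icc 1 m, ((2^(ℓ+1)-2) : ℚ) = 4 * 2^m - 4 - 2*m := by
  induction m with
  | zero => norm_num
  | succ M ih =>
    rw [Finset.sum_Icc_succ_top (by omega), ih]
    push_cast
    ring

theorem stmt_4 (n : ℕ) (hn : 3 ≤ n) :
    (∑ ℓ ∈ Finset.Icc 1 (n-3), ∑ k ∈ Finset.Icc 1 (n-ℓ-2),
      ((2^(ℓ+1)-2) * (2^(k+1)-2) * (2^(k+1)-3) * 2^(3*(n-ℓ-k-2)) : ℚ))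
    = (4/441) * 2^(3*n) - (1/3) * 2^(2*n) + (5/3) * n * 2^n - (37/9) * 2^n
      + (12/7) * n + 652/147 := by
  obtain ⟨m, rfl⟩ : ∃ m, n = m + 3 := ⟨n - 3, by omega⟩
  have hout : ∀ ℓ ∈ Icc 1 (m+3-3),
      (∑ k ∈ Finset.Icc 1 (m+3-ℓ-2),
        ((2^(ℓ+1)-2) * (2^(k+1)-2) * (2^(k+1)-3) * 2^(3*(m+3-ℓ-k-2)) : ℚ))
      = 32/21 * ((2^(ℓ+1)-2) * 8^(m+1-ℓ))
        - 4 * ((2^(ℓ+1)-2) * 4^(m+1-ℓ))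
        + 10/3 * ((2^(ℓ+1)-2) * 2^(m+1-ℓ))
        - 6/7 * ((2^(ℓ+1)-2)) := by
    intro ℓ hℓ
    simp only [mem_Icc] at hℓ
    have h1 : m+3-ℓ-2 = m+1-ℓ := by omega
    have h3 : ∀ k ∈ Icc 1 (m+1-ℓ),
        ((2^(ℓ+1)-2) * (2^(k+1)-2) * (2^(k+1)-3) * 2^(3*(m+3-ℓ-k-2)) : ℚ)
        = (2^(ℓ+1)-2) * ((2^(k+1)-2) * (2^(k+1)-3) * 2^(3*((m+1-ℓ)-k))) := by
      intro k hk
      have h2 : 3*(m+3-ℓ-k-2) = 3*((m+1-ℓ)-k) := by omega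
      rw [h2]; ring
    rw [h1, Finset.sum_congr rfl h3, ← Finset.mul_sum, my_inner_sum]
    ring
  rw [Finset.sum_congr rfl hout, Finset.sum_sub_distrib, Finset.sum_add_distrib,
    Finset.sum_sub_distrib, ← Finset.mul_sum, ← Finset.mul_sum, ← Finset.mul_sum,
    ← Finset.mul_sum]
  have hm : m + 3 - 3 = m := by omega
  rw [hm, my_lemA, my_lemB, my_lemC, my_lemD]
  have e1 : (2:ℚ)^(3*(m+3)) = 512 * 8^m := by
    rw [pow_mul]; norm_num; rw [pow_add]; norm_num; ring
  have e2 : (2:ℚ)^(2*(m+3)) = 64 * 4^m := by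
    rw [pow_mul]; norm_num; rw [pow_add]; norm_num; ring
  have e3 : (2:ℚ)^(m+3) = 8 * 2^m := by rw [pow_add]; norm_num; ring
  rw [e1, e2, e3]
  push_cast
  ring
end

section
/- For every natural number n ≥ 1, the quantity (1/3)·2^{4n} - 6·2^{3n} + 20·n·2^{2n} - (127/3)·2^{2n} + 18·n·2^n + 48·2^n is a nonnegative integer divisible by 24. -/
private def NNq (n : ℕ) : ℤ :=
  2^(4*n) - 18*2^(3*n) + (60*n - 127)*2^(2*n) + (54*n + 144)*2^n

private lemma NNq_key (n : ℕ) :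
    NNq (n+8) = NNq (n+2)
      + 72 * (59652320 * (2^n)^4 - 4194288 * (2^n)^3
          + (54600*n + 321310) * (2^n)^2 + (189*n + 2034) * 2^n) := by
  simp only [NNq]
  push_cast
  ring

private lemma NNq_dvd_aux : ∀ n : ℕ,
    72 ∣ NNq (n+2) ∧ 72 ∣ NNq (n+3) ∧ 72 ∣ NNq (n+4) ∧ 72 ∣ NNq (n+5)
      ∧ 72 ∣ NNq (n+6) ∧ 72 ∣ NNq (n+7) := by
  intro n
  induction n with
  | zero => refine ⟨?_, ?_, ?_, ?_, ?_, ?_⟩ <;> · simp only [NNq]; decide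
  | succ k ih =>
    obtain ⟨h2, h3, h4, h5, h6, h7⟩ := ih
    refine ⟨h3, h4, h5, h6, h7, ?_⟩
    have : k + 1 + 7 = k + 8 := by ring
    rw [this, NNq_key k]
    exact dvd_add h2 (Dvd.intro _ rfl)

private lemma NNq_dvd (n : ℕ) : 72 ∣ NNq n := by
  match n with
  | 0 => simp only [NNq]; decide
  | 1 => simp only [NNq]; decide
  | (k+2) => exact (NNq_dvd_aux k).1

private lemma NNq_nonneg (n : ℕ) (hn : 1 ≤ n) : 0 ≤ NNq n := by
  match n with
  | 1 => simp only [NNq]; decide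
  | 2 => simp only [NNq]; decide
  | 3 => simp only [NNq]; decide
  | 4 => simp only [NNq]; decide
  | (k+5) =>
    have h1 : (18:ℤ) ≤ 2^(k+5) := by
      calc (18:ℤ) ≤ 2^5 := by norm_num
      _ ≤ 2^(k+5) := pow_le_pow_right₀ (by norm_num) (by omega)
    have h2 : (0:ℤ) ≤ 2^(3*(k+5)) * (2^(k+5) - 18) :=
      mul_nonneg (by positivity) (by linarith)
    have h3 : (0:ℤ) ≤ (60*((k:ℤ)+5) - 127) * 2^(2*(k+5)) :=
      mul_nonneg (by linarith [Int.ofNat_nonneg k]) (by positivity)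
    have h4 : (0:ℤ) ≤ (54*((k:ℤ)+5) + 144) * 2^(k+5) :=
      mul_nonneg (by linarith [Int.ofNat_nonneg k]) (by positivity)
    have key : NNq (k+5) = 2^(3*(k+5)) * (2^(k+5) - 18)
        + (60*((k:ℤ)+5) - 127) * 2^(2*(k+5)) + (54*((k:ℤ)+5) + 144) * 2^(k+5) := by
      simp only [NNq]; push_cast; ring
    rw [key]
    linarith

theorem stmt_8 (n : ℕ) (hn : 1 ≤ n) :
    ∃ m : ℕ, 24 ∣ m ∧
      ((1/3) * 2^(4*n) - 6 * 2^(3*n) + 20 * n * 2^(2*n) - (127/3) * 2^(2*n)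
        + 18 * n * 2^n + 48 * 2^n : ℚ) = m := by
  obtain ⟨t, ht⟩ := NNq_dvd n
  have htn : 0 ≤ t := by
    have := NNq_nonneg n hn
    nlinarith [ht]
  set s : ℕ := t.toNat with hs
  have hts : t = (s : ℤ) := (Int.toNat_of_nonneg htn).symm
  refine ⟨24 * s, ⟨s, rfl⟩, ?_⟩
  have hq : (NNq n : ℚ) = 72 * s := by
    rw [hts] at ht; exact_mod_cast congrArg (fun z : ℤ => (z : ℚ)) ht
  have hexp : ((1/3) * 2^(4*n) - 6 * 2^(3*n) + 20 * n * 2^(2*n) - (127/3) * 2^(2*n)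
        + 18 * n * 2^n + 48 * 2^n : ℚ) = (NNq n : ℚ) / 3 := by
    simp only [NNq]
    push_cast
    ring
  rw [hexp, hq]
  push_cast
  ring
end

section
/- Define R(n) = ((2/3)·2^{4n} - 20·n·2^{2n} + (160/3)·2^{2n} - 18·n·2^n - 54·2^n) / (2^{4n} - 6·2^{3n} + 11·2^{2n} - 6·2^n) for real n ≥ 3. Then R(n) > 2/3 for every integer n ≥ 3. -/
lemma aux_lin (n : ℕ) (hn : 5 ≤ n) : 5*n + 2 ≤ 2^n := by
  induction n, hn using Nat.le_induction with
  | base => norm_num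
  | succ n hn ih =>
    have : 2^(n+1) = 2 * 2^n := by ring
    omega

lemma key_nat (n : ℕ) (hn : 3 ≤ n) : 20*n*2^n + 18*n + 50 < 4*4^n + 46*2^n := by
  rcases lt_or_ge n 5 with h5 | h5
  · interval_cases n <;> norm_num
  · have h1 := aux_lin n h5
    have h2 : n + 1 ≤ 2^n := Nat.lt_two_pow_self (n := n)
    have h4 : (4:ℕ)^n = 2^n * 2^n := by
      rw [show (4:ℕ)=2*2 from rfl, mul_pow]
    nlinarith [Nat.one_le_two_pow (n := n)]

theorem stmt_10 (n : ℕ) (hn : 3 ≤ n) :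
    ((2/3) * 2^(4*n) - 20 * n * 2^(2*n) + (160/3) * 2^(2*n) - 18 * n * 2^n - 54 * 2^n) /
      (2^(4*n) - 6 * 2^(3*n) + 11 * 2^(2*n) - 6 * 2^n) > (2/3 : ℝ) := by
  set x : ℝ := 2^n with hx
  have hx8 : (8:ℝ) ≤ x := by
    rw [hx]
    calc (8:ℝ) = 2^3 := by norm_num
    _ ≤ 2^n := by exact pow_le_pow_right₀ (by norm_num) hn
  have h2 : (2:ℝ)^(2*n) = x^2 := by rw [hx, ← pow_mul, mul_comm 2 n]
  have h3 : (2:ℝ)^(3*n) = x^3 := by rw [hx, ← pow_mul, mul_comm 3 n]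
  have h4 : (2:ℝ)^(4*n) = x^4 := by rw [hx, ← pow_mul, mul_comm 4 n]
  rw [h2, h3, h4]
  have hD : (0:ℝ) < x^4 - 6*x^3 + 11*x^2 - 6*x := by
    have hfac : x^4 - 6*x^3 + 11*x^2 - 6*x = x*((x-1)*((x-2)*(x-3))) := by ring
    rw [hfac]
    have hx0 : (0:ℝ) < x := by linarith
    exact mul_pos hx0 (mul_pos (by linarith) (mul_pos (by linarith) (by linarith)))
  rw [gt_iff_lt, lt_div_iff₀ hD]
  have hk := key_nat n hn
  have hkr : 20*(n:ℝ)*x + 18*n + 50 < 4*x^2 + 46*x := by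
    have hc : ((20*n*2^n + 18*n + 50 : ℕ) : ℝ) < ((4*4^n + 46*2^n : ℕ) : ℝ) := by
      exact_mod_cast hk
    push_cast at hc
    have h4n : ((4:ℝ))^n = x^2 := by
      rw [hx, show (4:ℝ) = 2^2 by norm_num, ← pow_mul, ← pow_mul, mul_comm 2 n]
    rw [h4n] at hc
    linarith
  nlinarith [mul_pos (by linarith : (0:ℝ) < x) (sub_pos.mpr hkr)]
end

section
/- Define R(n) = ((2/3)·2^{4n} - 20·n·2^{2n} + (160/3)·2^{2n} - 18·n·2^n - 54·2^n) / (2^{4n} - 6·2^{3n} + 11·2^{2n} - 6·2^n). Then R(n) > R(n+1) for every integer n ≥ 3, i.e., R is strictly decreasing on integers n ≥ 3. -/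
lemma key_ineq (x y : ℝ) (hx : 8 ≤ x) (hy : 3 ≤ y) (hxy : 8*y ≤ x + 16) :
    ((2/3) * (16*x^4) - 20 * (y+1) * (4*x^2) + (160/3) * (4*x^2) - 18 * (y+1) * (2*x) - 54 * (2*x)) *
      (x^4 - 6 * x^3 + 11 * x^2 - 6 * x)
    < ((2/3) * x^4 - 20 * y * x^2 + (160/3) * x^2 - 18 * y * x - 54 * x) *
      (16*x^4 - 6 * (8*x^3) + 11 * (4*x^2) - 6 * (2*x)) := by
  have hu : (0:ℝ) ≤ x - 8 := by linarith
  have hw : (0:ℝ) ≤ (x - 8) - 8*(y - 3) := by linarith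
  nlinarith [mul_nonneg hw (pow_nonneg hu 1), mul_nonneg hw (pow_nonneg hu 2),
    mul_nonneg hw (pow_nonneg hu 3), mul_nonneg hw (pow_nonneg hu 4),
    mul_nonneg hw (pow_nonneg hu 5), mul_nonneg hw (pow_nonneg hu 6),
    hw, pow_nonneg hu 2, pow_nonneg hu 3, pow_nonneg hu 4, pow_nonneg hu 5,
    pow_nonneg hu 6, pow_nonneg hu 7]

lemma nat_bound (n : ℕ) (hn : 3 ≤ n) : 8*n ≤ 2^n + 16 := by
  induction n with
  | zero => omega
  | succ m ih =>
    rcases Nat.lt_or_ge m 3 with h | h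
    · interval_cases m <;> simp_all <;> omega
    · have h2 : 8 ≤ 2^m := by calc 8 = 2^3 := rfl
        _ ≤ 2^m := Nat.pow_le_pow_right (by norm_num) h
      have := ih h
      have : 2^(m+1) = 2 * 2^m := by ring
      omega

theorem stmt_12 (n : ℕ) (hn : 3 ≤ n) :
    let R : ℕ → ℝ := fun m =>
      ((2/3) * 2^(4*m) - 20 * m * 2^(2*m) + (160/3) * 2^(2*m) - 18 * m * 2^m - 54 * 2^m) /
        (2^(4*m) - 6 * 2^(3*m) + 11 * 2^(2*m) - 6 * 2^m)
    R n > R (n+1) := by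
  intro R
  set x : ℝ := 2^n with hxdef
  have hx8 : (8:ℝ) ≤ x := by
    calc (8:ℝ) = 2^3 := by norm_num
    _ ≤ 2^n := by exact pow_le_pow_right₀ one_le_two hn
  have hy3 : (3:ℝ) ≤ (n:ℝ) := by exact_mod_cast hn
  have hxy : 8*(n:ℝ) ≤ x + 16 := by
    have := nat_bound n hn
    have : ((8*n : ℕ) : ℝ) ≤ ((2^n + 16 : ℕ) : ℝ) := by exact_mod_cast this
    push_cast at this
    linarith
  have e1 : (2:ℝ)^(4*n) = x^4 := by rw [mul_comm, pow_mul]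
  have e2 : (2:ℝ)^(3*n) = x^3 := by rw [mul_comm, pow_mul]
  have e3 : (2:ℝ)^(2*n) = x^2 := by rw [mul_comm, pow_mul]
  have hs : (2:ℝ)^(n+1) = 2*x := by rw [pow_succ]; ring
  have e4 : (2:ℝ)^(4*(n+1)) = 16*x^4 := by rw [mul_comm, pow_mul, hs]; ring
  have e5 : (2:ℝ)^(3*(n+1)) = 8*x^3 := by rw [mul_comm, pow_mul, hs]; ring
  have e6 : (2:ℝ)^(2*(n+1)) = 4*x^2 := by rw [mul_comm, pow_mul, hs]; ring
  have hx0 : (0:ℝ) < x := by linarith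
  have hD : (0:ℝ) < x^4 - 6 * x^3 + 11 * x^2 - 6 * x := by
    have : x^4 - 6 * x^3 + 11 * x^2 - 6 * x = x*(x-1)*(x-2)*(x-3) := by ring
    rw [this]
    apply mul_pos (mul_pos (mul_pos hx0 (by linarith) ) (by linarith)) (by linarith)
  have hD' : (0:ℝ) < 16*x^4 - 6 * (8*x^3) + 11 * (4*x^2) - 6 * (2*x) := by
    have : 16*x^4 - 6 * (8*x^3) + 11 * (4*x^2) - 6 * (2*x) = 2*x*(2*x-1)*(2*x-2)*(2*x-3) := by ring
    rw [this]
    apply mul_pos (mul_pos (mul_pos (by linarith) (by linarith)) (by linarith)) (by linarith)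
  show R (n+1) < R n
  simp only [R, ← hxdef, e1, e2, e3, e4, e5, e6, hs, Nat.cast_add, Nat.cast_one]
  rw [div_lt_div_iff₀ hD' hD]
  have := key_ineq x (n:ℝ) hx8 hy3 hxy
  linarith [this]
end

section
/- Let x₀, x₁, x₂, x₃ be pairwise distinct binary strings of length n. Among the three pairings {{0,1},{2,3}}, {{0,2},{1,3}}, {{0,3},{1,2}}, at most one pairing {i,j},{k,l} can satisfy: the longest common prefix of x_i and x_j or of x_k and x_l strictly exceeds the longest common prefixes of all pairs crossing the pairing. In other words, the events A = (P_{0,1} ∪ P_{2,3}), B = (P_{0,2} ∪ P_{1,3}), C = (P_{0,3} ∪ P_{1,2}) (where P_{i,j} means the pair (i,j) attains the strictly largest common prefix length among the six pairs) are mutually exclusive. -/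
/-- Length of the longest common prefix of two binary strings of length `n`. -/
def lcp {n : ℕ} (x y : Fin n → Bool) : ℕ :=
  ((Finset.range (n+1)).filter (fun m => ∀ i : Fin n, (i : ℕ) < m → x i = y i)).sup id

theorem lcp_comm {n : ℕ} (x y : Fin n → Bool) : lcp x y = lcp y x := by
  unfold lcp
  congr 1
  apply Finset.filter_congr
  intro m _
  constructor <;> intro h i hi <;> exact (h i hi).symm

theorem stmt_19 (n : ℕ) (x0 x1 x2 x3 : Fin n → Bool)
    (h01 : x0 ≠ x1) (h02 : x0 ≠ x2) (h03 : x0 ≠ x3)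
    (h12 : x1 ≠ x2) (h13 : x1 ≠ x3) (h23 : x2 ≠ x3) :
    -- `P a b c d` : the pair (a,b) attains the strictly largest common prefix
    -- length among the six pairs of {a,b,c,d}
    let P : (Fin n → Bool) → (Fin n → Bool) → (Fin n → Bool) → (Fin n → Bool) → Prop :=
      fun a b c d => lcp a b > lcp a c ∧ lcp a b > lcp a d ∧ lcp a b > lcp b c ∧
        lcp a b > lcp b d ∧ lcp a b > lcp c d
    let A := P x0 x1 x2 x3 ∨ P x2 x3 x0 x1
    let B := P x0 x2 x1 x3 ∨ P x1 x3 x0 x2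
    let C := P x0 x3 x1 x2 ∨ P x1 x2 x0 x3
    ¬(A ∧ B) ∧ ¬(A ∧ C) ∧ ¬(B ∧ C) := by
  intro P A B C
  have e01 := lcp_comm x0 x1
  have e02 := lcp_comm x0 x2
  have e03 := lcp_comm x0 x3
  have e12 := lcp_comm x1 x2
  have e13 := lcp_comm x1 x3
  have e23 := lcp_comm x2 x3
  refine ⟨?_, ?_, ?_⟩ <;>
    rintro ⟨(⟨a1,a2,a3,a4,a5⟩|⟨a1,a2,a3,a4,a5⟩), (⟨b1,b2,b3,b4,b5⟩|⟨b1,b2,b3,b4,b5⟩)⟩ <;>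
    omega
end
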